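/- Let U ∈ ℝ^{(n+m)×r} and V ∈ ℝ^{n×r} have orthonormal columns. Suppose A ∈ ℝ^{(n+m)×n} satisfies A = U Uᵀ A V Vᵀ (its column space lies in the span of the columns of U and its row space lies in the span of the columns of V), and B ∈ ℝ^{(n+m)×n} satisfies UᵀB = 0 and B V = 0 (its column space is orthogonal to the columns of U and its row space is orthogonal to the columns of V). Then ‖A + B‖_nuc = ‖A‖_nuc + ‖B‖_nuc. -/

import Mathlib

open MeasureTheory ProbabilityTheory Matrix Real

/-- Frobenius norm of a real matrix. -/
noncomputable def frobNorm {p q : ℕ} (A : Matrix (Fin p) (Fin q) ℝ) : ℝ :=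
  Real.sqrt (∑ i, ∑ j, (A i j) ^ 2)

/-- Singular values of a real matrix: square roots of the eigenvalues of Aᵀ * A. -/
noncomputable def svals {p q : ℕ} (A : Matrix (Fin p) (Fin q) ℝ) (j : Fin q) : ℝ :=
  Real.sqrt ((Matrix.isHermitian_conjTranspose_mul_self A).eigenvalues j)

/-- Operator (spectral) norm: the largest singular value. -/
noncomputable def opNorm {p q : ℕ} (A : Matrix (Fin p) (Fin q) ℝ) : ℝ := ⨆ j, svals A j

/-- Nuclear norm: the sum of the singular values. -/
noncomputable def nucNorm {p q : ℕ} (A : Matrix (Fin p) (Fin q) ℝ) : ℝ := ∑ j, svals A j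

open scoped MatrixOrder in
/-- Port: the square root of a positive semidefinite matrix, via the functional calculus. -/
noncomputable def Matrix.PosSemidef.sqrt {k : ℕ} {M : Matrix (Fin k) (Fin k) ℝ}
    (_ : M.PosSemidef) : Matrix (Fin k) (Fin k) ℝ := CFC.sqrt M

open scoped MatrixOrder in
lemma Matrix.PosSemidef.posSemidef_sqrt {k : ℕ} {M : Matrix (Fin k) (Fin k) ℝ}
    (hM : M.PosSemidef) : hM.sqrt.PosSemidef :=
  (CFC.sqrt_nonneg M).posSemidef

open scoped MatrixOrder in
lemma Matrix.PosSemidef.sqrt_mul_self {k : ℕ} {M : Matrix (Fin k) (Fin k) ℝ}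
    (hM : M.PosSemidef) : hM.sqrt * hM.sqrt = M :=
  CFC.sqrt_mul_sqrt_self M hM.nonneg

open scoped MatrixOrder in
lemma Matrix.PosSemidef.eq_sqrt_of_sq_eq {k : ℕ} {M B : Matrix (Fin k) (Fin k) ℝ}
    (hB : B.PosSemidef) (hM : M.PosSemidef) (h : B ^ 2 = M) : B = hM.sqrt :=
  (CFC.sqrt_unique (by rw [← sq]; exact h) hB.nonneg).symm

lemma aux_psd {p q : ℕ} (M : Matrix (Fin p) (Fin q) ℝ) : PosSemidef (Mᵀ * M) := by
  rw [← conjTranspose_eq_transpose_of_trivial]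
  exact posSemidef_conjTranspose_mul_self M

open scoped MatrixOrder in
lemma aux_nucNorm_eq_trace {p q : ℕ} (M : Matrix (Fin p) (Fin q) ℝ) :
    nucNorm M = (aux_psd M).sqrt.trace := by
  unfold nucNorm svals PosSemidef.sqrt
  rw [CFC.sqrt_eq_cfc, cfc_nnreal_eq_real _ _ (aux_psd M).nonneg, (aux_psd M).1.cfc_eq,
    IsHermitian.cfc, Unitary.conjStarAlgAut_apply]
  rw [Matrix.trace_mul_cycle]
  simp [trace_diagonal]
  refine Finset.sum_congr rfl fun j _ => ?_
  rw [max_eq_left ((aux_psd M).eigenvalues_nonneg j)]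

lemma aux_eq_zero_of_trace {p q : ℕ} (M : Matrix (Fin p) (Fin q) ℝ)
    (h : trace (Mᵀ * M) = 0) : M = 0 := by
  ext i j
  have h' : ∑ j, ∑ i, M i j ^ 2 = 0 := by
    rw [← h]; simp [trace, Matrix.mul_apply, diag, sq]
  have h1 := Finset.sum_eq_zero_iff_of_nonneg
    (fun j _ => Finset.sum_nonneg fun i _ => sq_nonneg (M i j)) |>.mp h'
  have h2 := Finset.sum_eq_zero_iff_of_nonneg (fun i _ => sq_nonneg (M i j)) |>.mp
    (h1 j (Finset.mem_univ j)) i (Finset.mem_univ i)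
  simpa using pow_eq_zero_iff (n := 2) (by norm_num) |>.mp h2

/-- decomposability of the nuclear norm. If the row/column spaces of A lie in
the spans of the columns of V and U respectively, and those of B are orthogonal to them,
then ‖A + B‖_nuc = ‖A‖_nuc + ‖B‖_nuc. -/
theorem nucNorm_decomposable {n m r : ℕ}
    (U : Matrix (Fin (n + m)) (Fin r) ℝ) (V : Matrix (Fin n) (Fin r) ℝ)
    (hU : Uᵀ * U = 1) (hV : Vᵀ * V = 1)
    (A B : Matrix (Fin (n + m)) (Fin n) ℝ)
    (hA : A = U * Uᵀ * A * (V * Vᵀ)) (hB1 : Uᵀ * B = 0) (hB2 : B * V = 0) :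
    nucNorm (A + B) = nucNorm A + nucNorm B := by
  have hVB : Vᵀ * Bᵀ = 0 := by
    have := congrArg Matrix.transpose hB2
    simpa [Matrix.transpose_mul] using this
  have hAtB : Aᵀ * B = 0 := by
    rw [hA]
    simp [Matrix.transpose_mul, Matrix.mul_assoc, hB1]
  have hABt : A * Bᵀ = 0 := by
    rw [hA]
    simp [Matrix.mul_assoc, hVB]
  set X := Aᵀ * A with hXdef
  set Y := Bᵀ * B with hYdef
  have hX := aux_psd A
  have hY := aux_psd B
  have hXY : X * Y = 0 := by
    have : X * Y = Aᵀ * ((A * Bᵀ) * B) := by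
      simp [hXdef, hYdef, Matrix.mul_assoc]
    rw [this, hABt]
    simp
  have hYX : Y * X = 0 := by
    have : Bᵀ * (A * Bᵀ)ᵀ * Aᵀᵀ = 0 := by rw [hABt]; simp
    simpa [hYdef, hXdef, Matrix.transpose_mul, Matrix.mul_assoc] using this
  set S := hX.sqrt with hSdef
  set T := hY.sqrt with hTdef
  have hShem : Sᵀ = S := by
    have := hX.posSemidef_sqrt.isHermitian
    rwa [IsHermitian, conjTranspose_eq_transpose_of_trivial] at this
  have hThem : Tᵀ = T := by
    have := hY.posSemidef_sqrt.isHermitian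
    rwa [IsHermitian, conjTranspose_eq_transpose_of_trivial] at this
  have hSS : S * S = X := hX.sqrt_mul_self
  have hTT : T * T = Y := hY.sqrt_mul_self
  have hST : S * T = 0 := by
    apply aux_eq_zero_of_trace
    have : (S * T)ᵀ * (S * T) = T * (S * S) * T := by
      rw [Matrix.transpose_mul, hShem, hThem]
      simp [Matrix.mul_assoc]
    rw [this, hSS, Matrix.trace_mul_cycle, hTT, hYX]
    simp
  have hTS : T * S = 0 := by
    have := congrArg Matrix.transpose hST
    rwa [Matrix.transpose_mul, hShem, hThem, Matrix.transpose_zero] at this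
  have hsum : (A + B)ᵀ * (A + B) = X + Y := by
    have hBtA : Bᵀ * A = 0 := by
      have := congrArg Matrix.transpose hAtB
      rwa [Matrix.transpose_mul, Matrix.transpose_transpose, Matrix.transpose_zero] at this
    rw [Matrix.transpose_add, Matrix.add_mul, Matrix.mul_add, Matrix.mul_add,
      hAtB, hBtA]
    simp [hXdef, hYdef]
  have hsq : (S + T) ^ 2 = (A + B)ᵀ * (A + B) := by
    rw [hsum, sq, Matrix.add_mul, Matrix.mul_add, Matrix.mul_add, hSS, hTT, hST, hTS]
    simp
  have hZ := aux_psd (A + B)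
  have hsqrt : hZ.sqrt = S + T :=
    ((hX.posSemidef_sqrt.add hY.posSemidef_sqrt).eq_sqrt_of_sq_eq hZ hsq).symm
  rw [aux_nucNorm_eq_trace (A + B), aux_nucNorm_eq_trace A, aux_nucNorm_eq_trace B,
    hsqrt, Matrix.trace_add]
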